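/- Fix a density h ∈ 𝒟, let Q⋄(f,g) := (∫_X f dμ)(∫_X g dμ)·h, and let Q be a quadratic stochastic operator with d̂_u(Q,Q⋄) = ε. Then for all densities u, v lying in the image ℚ(𝒟) (or its closure), ‖ℚ(u) − ℚ(v)‖₁ ≤ 3ε·‖u − v‖₁; moreover the diameter of ℚ(𝒟) in the L¹ norm is at most 2ε. -/

import Mathlib

open MeasureTheory Filter Topology

noncomputable section

/-- The set of densities in `L¹(μ)`. -/
def Density {X : Type*} [MeasurableSpace X] (μ : Measure X) : Set (Lp ℝ 1 μ) :=
  {f | 0 ≤ f ∧ ‖f‖ = 1}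

/-- `Q : L¹ × L¹ → L¹` is a quadratic stochastic operator: bilinear, positivity preserving,
symmetric and `‖Q(f,g)‖₁ = ‖f‖₁ ‖g‖₁` for `f, g ≥ 0`. -/
structure IsQSO {X : Type*} [MeasurableSpace X] (μ : Measure X)
    (Q : Lp ℝ 1 μ → Lp ℝ 1 μ → Lp ℝ 1 μ) : Prop where
  add_left : ∀ f f' g, Q (f + f') g = Q f g + Q f' g
  smul_left : ∀ (c : ℝ) f g, Q (c • f) g = c • Q f g
  add_right : ∀ f g g', Q f (g + g') = Q f g + Q f g'
  smul_right : ∀ (c : ℝ) f g, Q f (c • g) = c • Q f g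
  nonneg : ∀ f g, 0 ≤ f → 0 ≤ g → 0 ≤ Q f g
  symm : ∀ f g, Q f g = Q g f
  norm_mul : ∀ f g, 0 ≤ f → 0 ≤ g → ‖Q f g‖ = ‖f‖ * ‖g‖

/-- The quadratic map `ℚ(f) = Q(f,f)`. -/
def QQ {X : Type*} [MeasurableSpace X] {μ : Measure X}
    (Q : Lp ℝ 1 μ → Lp ℝ 1 μ → Lp ℝ 1 μ) (f : Lp ℝ 1 μ) : Lp ℝ 1 μ := Q f f

/-- The iterates `ℚⁿ`. -/
def Qiter {X : Type*} [MeasurableSpace X] {μ : Measure X}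
    (Q : Lp ℝ 1 μ → Lp ℝ 1 μ → Lp ℝ 1 μ) (n : ℕ) : Lp ℝ 1 μ → Lp ℝ 1 μ := (QQ Q)^[n]

/-- `Pchain Q f n = P_f^{[0,n]}`, the nonhomogeneous Markov chain associated with `Q`
and the density `f`, i.e. `P_f^{[0,0]} = id` and
`P_f^{[0,n+1]}(g) = Q(ℚⁿ(f), P_f^{[0,n]}(g))`. -/
def Pchain {X : Type*} [MeasurableSpace X] {μ : Measure X}
    (Q : Lp ℝ 1 μ → Lp ℝ 1 μ → Lp ℝ 1 μ) (f : Lp ℝ 1 μ) :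
    ℕ → Lp ℝ 1 μ → Lp ℝ 1 μ
  | 0 => id
  | n + 1 => fun g => Q (Qiter Q n f) (Pchain Q f n g)

/-- The metric `d_u(Q₁,Q₂) = sup_{f ∈ 𝒟} ‖ℚ₁(f) - ℚ₂(f)‖₁`. -/
def du {X : Type*} [MeasurableSpace X] (μ : Measure X)
    (Q₁ Q₂ : Lp ℝ 1 μ → Lp ℝ 1 μ → Lp ℝ 1 μ) : ℝ :=
  ⨆ f : Density μ, ‖Q₁ f f - Q₂ f f‖

/-- The metric `d̂_u(Q₁,Q₂) = sup_{f,g ∈ 𝒟} ‖Q₁(f,g) - Q₂(f,g)‖₁`. -/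
def dhat {X : Type*} [MeasurableSpace X] (μ : Measure X)
    (Q₁ Q₂ : Lp ℝ 1 μ → Lp ℝ 1 μ → Lp ℝ 1 μ) : ℝ :=
  ⨆ f : Density μ, ⨆ g : Density μ, ‖Q₁ f g - Q₂ f g‖

/-- `supDiff μ Q n = sup_{f,g,h ∈ 𝒟} ‖P_f^{[0,n]}(g) - P_f^{[0,n]}(h)‖₁`. -/
def supDiff {X : Type*} [MeasurableSpace X] (μ : Measure X)
    (Q : Lp ℝ 1 μ → Lp ℝ 1 μ → Lp ℝ 1 μ) (n : ℕ) : ℝ :=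
  ⨆ f : Density μ, ⨆ g : Density μ, ⨆ h : Density μ,
    ‖Pchain Q f n g - Pchain Q f n h‖

/-- `Q` is norm quasi-mixing. -/
def NormQuasiMixing {X : Type*} [MeasurableSpace X] (μ : Measure X)
    (Q : Lp ℝ 1 μ → Lp ℝ 1 μ → Lp ℝ 1 μ) : Prop :=
  Tendsto (fun n => supDiff μ Q n) atTop (𝓝 0)

/-- `Q` is norm mixing (uniformly asymptotically stable). -/
def NormMixing {X : Type*} [MeasurableSpace X] (μ : Measure X)
    (Q : Lp ℝ 1 μ → Lp ℝ 1 μ → Lp ℝ 1 μ) : Prop :=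
  ∃ f ∈ Density μ,
    Tendsto (fun n => ⨆ g : Density μ, ‖Qiter Q n g - f‖) atTop (𝓝 0)

end

namespace QSOAux

noncomputable section
open MeasureTheory

variable {X : Type*} [MeasurableSpace X] {μ : Measure X}

lemma integral_eq_norm (f : Lp ℝ 1 μ) (hf : 0 ≤ f) : ∫ a, f a ∂μ = ‖f‖ := by
  rw [L1.norm_eq_integral_norm]
  refine integral_congr_ae ?_
  filter_upwards [(Lp.coeFn_nonneg f).mpr hf] with a ha
  simp only [Pi.zero_apply] at ha
  exact (Real.norm_of_nonneg ha).symm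

lemma norm_add_nonneg (f g : Lp ℝ 1 μ) (hf : 0 ≤ f) (hg : 0 ≤ g) :
    ‖f + g‖ = ‖f‖ + ‖g‖ := by
  rw [← integral_eq_norm f hf, ← integral_eq_norm g hg,
    ← integral_eq_norm (f + g) (add_nonneg hf hg),
    integral_congr_ae (Lp.coeFn_add f g)]
  exact integral_add (L1.integrable_coeFn f) (L1.integrable_coeFn g)

lemma posPart_nonneg (w : Lp ℝ 1 μ) : 0 ≤ Lp.posPart w := by
  rw [← Lp.coeFn_nonneg]
  filter_upwards [Lp.coeFn_posPart w] with a ha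
  simp [ha, le_max_right]

lemma negPart_nonneg (w : Lp ℝ 1 μ) : 0 ≤ Lp.negPart w := by
  rw [← Lp.coeFn_nonneg]
  filter_upwards [Lp.coeFn_negPart_eq_max w] with a ha
  simp [ha, le_max_right]

lemma posPart_sub_negPart (w : Lp ℝ 1 μ) : Lp.posPart w - Lp.negPart w = w := by
  apply Lp.ext
  filter_upwards [Lp.coeFn_sub (Lp.posPart w) (Lp.negPart w), Lp.coeFn_posPart w,
    Lp.coeFn_negPart w] with a h1 h2 h3
  rw [h1]
  simp only [Pi.sub_apply]
  rw [h2, h3]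
  rcases le_total (w a) 0 with hc | hc
  · simp [max_eq_right hc, min_eq_left hc]
  · simp [max_eq_left hc, min_eq_right hc]

lemma smul_nonneg' (c : ℝ) (hc : 0 ≤ c) (f : Lp ℝ 1 μ) (hf : 0 ≤ f) : 0 ≤ c • f := by
  rw [← Lp.coeFn_nonneg]
  filter_upwards [Lp.coeFn_smul c f, (Lp.coeFn_nonneg f).mpr hf] with a h1 h2
  simp only [Pi.zero_apply] at h2 ⊢
  rw [h1]
  simpa using mul_nonneg hc h2

lemma norm_eq_parts (w : Lp ℝ 1 μ) : ‖w‖ = ‖Lp.posPart w‖ + ‖Lp.negPart w‖ := by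
  rw [← integral_eq_norm _ (posPart_nonneg w), ← integral_eq_norm _ (negPart_nonneg w),
    L1.norm_eq_integral_norm, ← integral_add (L1.integrable_coeFn _) (L1.integrable_coeFn _)]
  refine integral_congr_ae ?_
  filter_upwards [Lp.coeFn_posPart w, Lp.coeFn_negPart w] with a h2 h3
  show ‖w a‖ = Lp.posPart w a + Lp.negPart w a
  rw [Real.norm_eq_abs, h2, h3]
  rcases le_total (w a) 0 with hc | hc
  · simp [abs_of_nonpos hc, max_eq_right hc, min_eq_left hc]
  · simp [abs_of_nonneg hc, max_eq_left hc, min_eq_right hc]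

end

end QSOAux

/-- Fix `h ∈ 𝒟`, let `Q⋄(f,g) = (∫ f dμ)(∫ g dμ)·h`, and let `Q` be a QSO
with `d̂_u(Q,Q⋄) = ε`. Then for all `u, v` in (the closure of) the image `ℚ(𝒟)` one has
`‖ℚ(u) − ℚ(v)‖₁ ≤ 3ε·‖u − v‖₁`, and the diameter of `ℚ(𝒟)` is at most `2ε`. -/
theorem contraction_near_Qdiamond {X : Type*} [MeasurableSpace X]
    (μ : Measure X) [SigmaFinite μ]
    (h : Lp ℝ 1 μ) (hh : h ∈ Density μ)
    (Qd : Lp ℝ 1 μ → Lp ℝ 1 μ → Lp ℝ 1 μ)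
    (hQd : ∀ f g : Lp ℝ 1 μ, Qd f g = ((∫ a, f a ∂μ) * ∫ a, g a ∂μ) • h)
    (Q : Lp ℝ 1 μ → Lp ℝ 1 μ → Lp ℝ 1 μ) (hQ : IsQSO μ Q)
    (ε : ℝ) (hε : dhat μ Q Qd = ε) :
    (∀ u ∈ closure (QQ Q '' Density μ), ∀ v ∈ closure (QQ Q '' Density μ),
        ‖QQ Q u - QQ Q v‖ ≤ 3 * ε * ‖u - v‖) ∧
    (∀ u ∈ QQ Q '' Density μ, ∀ v ∈ QQ Q '' Density μ, ‖u - v‖ ≤ 2 * ε) := by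
  classical
  obtain ⟨hhpos, hhnorm⟩ := hh
  have dint : ∀ f : Lp ℝ 1 μ, f ∈ Density μ → ∫ a, f a ∂μ = 1 := fun f hf => by
    rw [QSOAux.integral_eq_norm f hf.1, hf.2]
  have hQdh : ∀ f ∈ Density μ, ∀ g ∈ Density μ, Qd f g = h := by
    intro f hf g hg
    rw [hQd, dint f hf, dint g hg, one_mul, one_smul]
  have hbound2 : ∀ f ∈ Density μ, ∀ g ∈ Density μ, ‖Q f g - Qd f g‖ ≤ 2 := by
    intro f hf g hg
    calc ‖Q f g - Qd f g‖ ≤ ‖Q f g‖ + ‖Qd f g‖ := norm_sub_le _ _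
    _ ≤ 2 := by
        rw [hQ.norm_mul f g hf.1 hg.1, hf.2, hg.2, hQdh f hf g hg, hhnorm]; norm_num
  have hhD : h ∈ Density μ := ⟨hhpos, hhnorm⟩
  haveI : Nonempty ↑(Density μ) := ⟨⟨h, hhD⟩⟩
  have hkey : ∀ f ∈ Density μ, ∀ g ∈ Density μ, ‖Q f g - Qd f g‖ ≤ ε := by
    intro f hf g hg
    rw [← hε]
    have h1 : ‖Q f g - Qd f g‖ ≤ ⨆ g : Density μ, ‖Q f g - Qd f g‖ := by
      refine le_ciSup (f := fun g : Density μ => ‖Q f ↑g - Qd f ↑g‖) ⟨2, ?_⟩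
        (⟨g, hg⟩ : Density μ)
      rintro x ⟨⟨g', hg'⟩, rfl⟩
      exact hbound2 f hf g' hg'
    refine h1.trans (le_ciSup
      (f := fun f : Density μ => ⨆ g : Density μ, ‖Q ↑f ↑g - Qd ↑f ↑g‖) ⟨2, ?_⟩
      (⟨f, hf⟩ : Density μ))
    rintro x ⟨⟨f', hf'⟩, rfl⟩
    exact ciSup_le fun ⟨g', hg'⟩ => hbound2 f' hf' g' hg'
  have hε0 : 0 ≤ ε := le_trans (norm_nonneg _) (hkey h hhD h hhD)
  have hQh : ∀ f ∈ Density μ, ‖QQ Q f - h‖ ≤ ε := by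
    intro f hf
    have := hkey f hf f hf
    rwa [hQdh f hf f hf] at this
  have himg : QQ Q '' Density μ ⊆ Density μ := by
    rintro _ ⟨f, hf, rfl⟩
    refine ⟨hQ.nonneg f f hf.1 hf.1, ?_⟩
    rw [QQ, hQ.norm_mul f f hf.1 hf.1, hf.2]; norm_num
  have hclosed : IsClosed (Density μ) := by
    have : Density μ = {f : Lp ℝ 1 μ | 0 ≤ f} ∩ {f | ‖f‖ = 1} := rfl
    rw [this]
    exact (isClosed_le continuous_const continuous_id).inter
      (isClosed_eq continuous_norm continuous_const)
  have hclo : closure (QQ Q '' Density μ) ⊆ Density μ := closure_minimal himg hclosed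
  have hsub_l : ∀ f f' g, Q (f - f') g = Q f g - Q f' g := by
    intro f f' g
    have hff : f - f' = f + (-1 : ℝ) • f' := by rw [neg_one_smul, ← sub_eq_add_neg]
    rw [hff, hQ.add_left, hQ.smul_left, neg_one_smul, ← sub_eq_add_neg]
  have hcontr : ∀ u ∈ Density μ, ∀ v ∈ Density μ,
      ‖QQ Q u - QQ Q v‖ ≤ 3 * ε * ‖u - v‖ := by
    intro u hu v hv
    set w := u - v with hw
    set P := Lp.posPart w with hPdef
    set N := Lp.negPart w with hNdef
    have hPN : P - N = w := QSOAux.posPart_sub_negPart w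
    have hP0 : 0 ≤ P := QSOAux.posPart_nonneg w
    have hN0 : 0 ≤ N := QSOAux.negPart_nonneg w
    have hintw : ∫ a, w a ∂μ = 0 := by
      have h2 : ∫ a, w a ∂μ = ∫ a, (u a - v a) ∂μ := integral_congr_ae (Lp.coeFn_sub u v)
      rw [h2, integral_sub (L1.integrable_coeFn u) (L1.integrable_coeFn v),
        dint u hu, dint v hv, sub_self]
    have hPNeq : ‖P‖ = ‖N‖ := by
      have h1 : ∫ a, P a ∂μ - ∫ a, N a ∂μ = ∫ a, w a ∂μ := by
        rw [← integral_sub (L1.integrable_coeFn P) (L1.integrable_coeFn N)]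
        refine integral_congr_ae ?_
        have h2 := Lp.coeFn_sub P N
        rw [hPN] at h2
        exact h2.symm
      rw [QSOAux.integral_eq_norm P hP0, QSOAux.integral_eq_norm N hN0, hintw,
        sub_eq_zero] at h1
      exact h1
    have hnormw : ‖w‖ = 2 * ‖P‖ := by
      rw [QSOAux.norm_eq_parts w, ← hPdef, ← hNdef, ← hPNeq, two_mul]
    by_cases hP : ‖P‖ = 0
    · have hw0 : ‖w‖ = 0 := by rw [hnormw, hP, mul_zero]
      have huv : u = v := by
        have := norm_eq_zero.mp hw0
        rw [hw] at this
        exact sub_eq_zero.mp this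
      rw [huv, sub_self, norm_zero]
      positivity
    · have hα : 0 < ‖P‖ := lt_of_le_of_ne (norm_nonneg _) (Ne.symm hP)
      set α := ‖P‖ with hαdef
      set d₁ := α⁻¹ • P with hd₁def
      set d₂ := α⁻¹ • N with hd₂def
      have hd₁ : d₁ ∈ Density μ := by
        refine ⟨QSOAux.smul_nonneg' _ (by positivity) _ hP0, ?_⟩
        rw [hd₁def, norm_smul, Real.norm_eq_abs, abs_of_pos (inv_pos.mpr hα),
          inv_mul_cancel₀ (ne_of_gt hα)]
      have hd₂ : d₂ ∈ Density μ := by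
        refine ⟨QSOAux.smul_nonneg' _ (by positivity) _ hN0, ?_⟩
        rw [hd₂def, norm_smul, Real.norm_eq_abs, abs_of_pos (inv_pos.mpr hα), ← hPNeq,
          inv_mul_cancel₀ (ne_of_gt hα)]
      set s := (2:ℝ)⁻¹ • (u + v) with hsdef
      have hs : s ∈ Density μ := by
        refine ⟨QSOAux.smul_nonneg' _ (by norm_num) _ (add_nonneg hu.1 hv.1), ?_⟩
        rw [hsdef, norm_smul, Real.norm_eq_abs,
          QSOAux.norm_add_nonneg u v hu.1 hv.1, hu.2, hv.2,
          abs_of_pos (by norm_num : (0:ℝ) < 2⁻¹)]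
        norm_num
      have hPα : P = α • d₁ := by
        rw [hd₁def, smul_smul, mul_inv_cancel₀ (ne_of_gt hα), one_smul]
      have hNα : N = α • d₂ := by
        rw [hd₂def, smul_smul, mul_inv_cancel₀ (ne_of_gt hα), one_smul]
      have huv2 : u + v = (2:ℝ) • s := by
        rw [hsdef, smul_smul]
        norm_num
      clear_value s d₂ d₁ α N P w
      have hid : QQ Q u - QQ Q v = Q w (u + v) := by
        rw [hw, hsub_l, hQ.add_right, hQ.add_right, QQ, QQ, hQ.symm v u]
        abel
      have hidB : Q w (u + v) = (2 * α) • (Q d₁ s - Q d₂ s) := by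
        have e1 : Q d₁ s = (α⁻¹ * 2⁻¹) • Q P (u + v) := by
          rw [hd₁def, hsdef, hQ.smul_left, hQ.smul_right, smul_smul]
        have e2 : Q d₂ s = (α⁻¹ * 2⁻¹) • Q N (u + v) := by
          rw [hd₂def, hsdef, hQ.smul_left, hQ.smul_right, smul_smul]
        rw [e1, e2, ← smul_sub, smul_smul,
          show 2 * α * (α⁻¹ * 2⁻¹) = 1 from by field_simp, one_smul, ← hsub_l, hPN]
      have hQds : Q d₁ s - Q d₂ s = (Q d₁ s - Qd d₁ s) - (Q d₂ s - Qd d₂ s) := by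
        rw [hQdh d₁ hd₁ s hs, hQdh d₂ hd₂ s hs]
        abel
      calc ‖QQ Q u - QQ Q v‖ = (2 * α) * ‖Q d₁ s - Q d₂ s‖ := by
            rw [hid, hidB, norm_smul, Real.norm_eq_abs, abs_of_pos (by linarith)]
      _ ≤ (2 * α) * (ε + ε) := by
            refine mul_le_mul_of_nonneg_left ?_ (by linarith)
            rw [hQds]
            exact (norm_sub_le _ _).trans
              (add_le_add (hkey d₁ hd₁ s hs) (hkey d₂ hd₂ s hs))
      _ ≤ 3 * ε * ‖w‖ := by
            rw [hnormw]
            have hαε : 0 ≤ α * ε := mul_nonneg hα.le hε0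
            calc 2 * α * (ε + ε) = 4 * (α * ε) := by ring
            _ ≤ 6 * (α * ε) := by linarith
            _ = 3 * ε * (2 * α) := by ring
  refine ⟨fun u hu v hv => hcontr u (hclo hu) v (hclo hv), fun u hu v hv => ?_⟩
  obtain ⟨f, hf, rfl⟩ := hu
  obtain ⟨g, hg, rfl⟩ := hv
  calc ‖QQ Q f - QQ Q g‖ ≤ ‖QQ Q f - h‖ + ‖h - QQ Q g‖ := by
        have := dist_triangle (QQ Q f) h (QQ Q g)
        simpa [dist_eq_norm] using this
  _ ≤ ε + ε := add_le_add (hQh f hf) (by rw [norm_sub_rev]; exact hQh g hg)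
  _ = 2 * ε := by ring
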